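/- Let (X, 𝒰) be a Hausdorff uniform space and let α: G × X → X be a continuous action of a locally compact abelian group G. Then the following assertions are equivalent: (i) for every U ∈ 𝒰 there exist an open set O ⊆ G containing 0 and V ∈ 𝒰 such that {(α(s,x), α(t,y)) : s,t ∈ O, (x,y) ∈ V} ⊆ U; (ii) for every U ∈ 𝒰 there exist an open set O ⊆ G containing 0 and V ∈ 𝒰 such that {(α(s,x), y) : s ∈ O, (x,y) ∈ V} ⊆ U; (iii) for every U ∈ 𝒰 there exists an open set O ⊆ G containing 0 such that (α(s,x), x) ∈ U for all s ∈ O and all x ∈ X; (iv) the family of maps α_x: G → X, α_x(t) = α(t,x), indexed by x ∈ X, is equicontinuous at t = 0, i.e. for every U ∈ 𝒰 there exists an open set O ⊆ G containing 0 with (α_x(s), α_x(0)) ∈ U for all s ∈ O and all x ∈ X; (v) the family {α_x}_{x ∈ X} is uniformly equicontinuous, i.e. for every U ∈ 𝒰 there exists an open set O ⊆ G containing 0 with (α_x(s), α_x(t)) ∈ U for all x ∈ X and all s,t ∈ G with s − t ∈ O. -/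

import Mathlib

open Uniformity

/-- For a continuous action `α` of a locally compact abelian group `G` on a
Hausdorff uniform space `(X, 𝒰)`, the five equicontinuity-type conditions are equivalent. -/
theorem stmt1 {G X : Type*}
    [AddCommGroup G] [TopologicalSpace G] [IsTopologicalAddGroup G]
    [LocallyCompactSpace G] [T2Space G]
    [UniformSpace X] [T2Space X]
    (α : G → X → X)
    (hzero : ∀ x, α 0 x = x)
    (hadd : ∀ s t x, α s (α t x) = α (s + t) x)
    (hcont : Continuous fun p : G × X => α p.1 p.2) :
    List.TFAE
      [ -- (i)
        ∀ U ∈ 𝓤 X, ∃ O : Set G, IsOpen O ∧ (0 : G) ∈ O ∧ ∃ V ∈ 𝓤 X,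
          ∀ s ∈ O, ∀ t ∈ O, ∀ p : X × X, p ∈ V → (α s p.1, α t p.2) ∈ U,
        -- (ii)
        ∀ U ∈ 𝓤 X, ∃ O : Set G, IsOpen O ∧ (0 : G) ∈ O ∧ ∃ V ∈ 𝓤 X,
          ∀ s ∈ O, ∀ p : X × X, p ∈ V → (α s p.1, p.2) ∈ U,
        -- (iii)
        ∀ U ∈ 𝓤 X, ∃ O : Set G, IsOpen O ∧ (0 : G) ∈ O ∧
          ∀ s ∈ O, ∀ x : X, (α s x, x) ∈ U,
        -- (iv) equicontinuity of the family `αₓ` at `t = 0`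
        ∀ U ∈ 𝓤 X, ∃ O : Set G, IsOpen O ∧ (0 : G) ∈ O ∧
          ∀ s ∈ O, ∀ x : X, (α s x, α 0 x) ∈ U,
        -- (v) uniform equicontinuity of the family `αₓ`
        ∀ U ∈ 𝓤 X, ∃ O : Set G, IsOpen O ∧ (0 : G) ∈ O ∧
          ∀ (x : X) (s t : G), s - t ∈ O → (α s x, α t x) ∈ U ] := by
  tfae_have 1 → 2 := by
    intro h U hU
    obtain ⟨O, hO, h0, V, hV, hOV⟩ := h U hU
    exact ⟨O, hO, h0, V, hV, fun s hs p hp => by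
      have := hOV s hs 0 h0 p hp
      rwa [hzero] at this⟩
  tfae_have 2 → 3 := by
    intro h U hU
    obtain ⟨O, hO, h0, V, hV, hOV⟩ := h U hU
    exact ⟨O, hO, h0, fun s hs x => hOV s hs (x, x) (refl_mem_uniformity hV)⟩
  tfae_have 3 → 4 := by
    intro h U hU
    obtain ⟨O, hO, h0, hOU⟩ := h U hU
    exact ⟨O, hO, h0, fun s hs x => by rw [hzero]; exact hOU s hs x⟩
  tfae_have 4 → 3 := by
    intro h U hU
    obtain ⟨O, hO, h0, hOU⟩ := h U hU
    exact ⟨O, hO, h0, fun s hs x => by have := hOU s hs x; rwa [hzero] at this⟩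
  tfae_have 3 → 5 := by
    intro h U hU
    obtain ⟨O, hO, h0, hOU⟩ := h U hU
    refine ⟨O, hO, h0, fun x s t hst => ?_⟩
    have := hOU (s - t) hst (α t x)
    rwa [hadd, sub_add_cancel] at this
  tfae_have 5 → 3 := by
    intro h U hU
    obtain ⟨O, hO, h0, hOU⟩ := h U hU
    refine ⟨O, hO, h0, fun s hs x => ?_⟩
    have := hOU x s 0 (by simpa using hs)
    rwa [hzero] at this
  tfae_have 3 → 1 := by
    intro h U hU
    obtain ⟨W, hW, hWsymm, hWU⟩ := comp_comp_symm_mem_uniformity_sets hU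
    obtain ⟨O, hO, h0, hOW⟩ := h W hW
    refine ⟨O, hO, h0, W, hW, fun s hs t ht p hp => ?_⟩
    exact hWU ⟨p.2, ⟨p.1, hOW s hs p.1, hp⟩, hWsymm.symm _ _ (hOW t ht p.2)⟩
  tfae_finish
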